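/- For a real-valued martingale difference sequence (d_k) adapted to (G_k) with |d_k| ≤ c almost surely, the partial sums M_n = ∑_{k=1}^n d_k satisfy the tail bound P(M_n < −y) ≤ exp(−y^2/(2c^2 n)) for all y > 0; applied in the urn context with m_n > 2nl, this gives P(S_n < t) ≤ 2 exp(−(b + r + 2nl − t)^2/(2c^2 n)) for all n ≥ n_0 and t < b + r + nl, and hence E[S_n^{−p}] = O(n^{−p}) for every p > 0. -/

import Mathlib

open MeasureTheory Filter Real ProbabilityTheory
open scoped ENNReal NNReal Topology

section Aux19
variable {Ω : Type*} {m0 : MeasurableSpace Ω} {μ : Measure Ω} [IsProbabilityMeasure μ]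
lemma aux19_int_of_bdd {f : Ω → ℝ} (hf : AEStronglyMeasurable f μ) {C : ℝ}
    (h : ∀ ω, |f ω| ≤ C) : Integrable f μ :=
  (integrable_const C).mono' hf (Filter.Eventually.of_forall fun ω => by
    rw [Real.norm_eq_abs]; exact h ω)

lemma aux19_exp_le_cosh {c x s : ℝ} (hc : 0 < c) (hx : |x| ≤ c) :
    Real.exp (s * x) ≤ Real.cosh (s * c) + (x / c) * Real.sinh (s * c) := by
  obtain ⟨hx1, hx2⟩ := abs_le.1 hx
  have hc' : c ≠ 0 := ne_of_gt hc
  have ha : (0:ℝ) ≤ (c - x) / (2 * c) := by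
    apply div_nonneg <;> linarith
  have hb : (0:ℝ) ≤ (c + x) / (2 * c) := by
    apply div_nonneg <;> linarith
  have hab : (c - x) / (2 * c) + (c + x) / (2 * c) = 1 := by field_simp; ring
  have key := convexOn_exp.2 (Set.mem_univ (-(s * c))) (Set.mem_univ (s * c)) ha hb hab
  simp only [smul_eq_mul] at key
  have harg : (c - x) / (2 * c) * -(s * c) + (c + x) / (2 * c) * (s * c) = s * x := by
    field_simp; ring
  rw [harg] at key
  refine key.trans (le_of_eq ?_)
  rw [Real.cosh_eq, Real.sinh_eq]
  field_simp
  ring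

lemma aux19_condexp_exp_le {𝒢 : MeasurableSpace Ω} (h𝒢 : 𝒢 ≤ m0) {d : Ω → ℝ} {c : ℝ}
    (hc : 0 < c) (hd : @AEStronglyMeasurable Ω ℝ _ m0 m0 d μ) (hdc : ∀ ω, |d ω| ≤ c)
    (h0 : (μ[d|𝒢]) =ᵐ[μ] 0) (s : ℝ) :
    (μ[fun ω => Real.exp (s * d ω)|𝒢]) ≤ᵐ[μ] fun _ => Real.exp (s ^ 2 * c ^ 2 / 2) := by
  have hd_int : Integrable d μ := aux19_int_of_bdd hd hdc
  have hexp_bdd : ∀ ω, |Real.exp (s * d ω)| ≤ Real.exp (|s| * c) := by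
    intro ω
    rw [abs_of_pos (Real.exp_pos _)]
    apply Real.exp_le_exp.2
    calc s * d ω ≤ |s * d ω| := le_abs_self _
      _ = |s| * |d ω| := abs_mul _ _
      _ ≤ |s| * c := by
          exact mul_le_mul_of_nonneg_left (hdc ω) (abs_nonneg _)
  have hexp_int : Integrable (fun ω => Real.exp (s * d ω)) μ :=
    aux19_int_of_bdd (Real.continuous_exp.comp_aestronglyMeasurable (hd.const_mul s)) hexp_bdd
  have haff_int : Integrable (fun ω => Real.cosh (s * c) + Real.sinh (s * c) / c * d ω) μ :=
    (integrable_const _).add (hd_int.const_mul _)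
  have h1 : (μ[fun ω => Real.exp (s * d ω)|𝒢]) ≤ᵐ[μ]
      (μ[fun ω => Real.cosh (s * c) + Real.sinh (s * c) / c * d ω|𝒢]) := by
    refine condExp_mono hexp_int haff_int (Filter.Eventually.of_forall fun ω => ?_)
    have := aux19_exp_le_cosh (x := d ω) (s := s) hc (hdc ω)
    calc Real.exp (s * d ω) ≤ Real.cosh (s * c) + d ω / c * Real.sinh (s * c) := this
      _ = Real.cosh (s * c) + Real.sinh (s * c) / c * d ω := by ring
  have hfun : (fun ω => Real.cosh (s * c) + Real.sinh (s * c) / c * d ω)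
      = (fun _ : Ω => Real.cosh (s * c)) + (Real.sinh (s * c) / c) • d := by
    funext ω; simp [smul_eq_mul]
  have h2 : (μ[fun ω => Real.cosh (s * c) + Real.sinh (s * c) / c * d ω|𝒢]) =ᵐ[μ]
      fun ω => Real.cosh (s * c) + Real.sinh (s * c) / c * (μ[d|𝒢]) ω := by
    rw [hfun]
    have hadd := condExp_add (μ := μ) (m := 𝒢)
      (f := fun _ : Ω => Real.cosh (s * c)) (g := (Real.sinh (s * c) / c) • d)
      (integrable_const _) (hd_int.smul _)
    have hsmul := condExp_smul (μ := μ) (m := 𝒢) (Real.sinh (s * c) / c) d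
    have hconst := condExp_const (μ := μ) h𝒢 (Real.cosh (s * c))
    filter_upwards [hadd, hsmul] with ω hω hω2
    simp only [Pi.add_apply] at hω
    rw [hω, hconst]
    simp only [Pi.smul_apply, smul_eq_mul] at hω2
    simp [hω2]
  filter_upwards [h1, h2, h0] with ω hω1 hω2 hω3
  rw [hω2, hω3] at hω1
  simp only [Pi.zero_apply, mul_zero, add_zero] at hω1
  refine hω1.trans ?_
  have := Real.cosh_le_exp_half_sq (s * c)
  refine this.trans (le_of_eq ?_)
  congr 1
  ring

lemma aux19_mgf_sum (𝒢 : ℕ → MeasurableSpace Ω) (h𝒢mono : Monotone 𝒢)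
    (h𝒢le : ∀ n, 𝒢 n ≤ m0) {c : ℝ} (hc : 0 < c) (dk : ℕ → Ω → ℝ)
    (hdkm : ∀ k, 1 ≤ k → Measurable[𝒢 k] (dk k))
    (hdk0 : ∀ k, (μ[dk (k + 1)|𝒢 k]) =ᵐ[μ] 0)
    (hdkc : ∀ k ω, |dk k ω| ≤ c) (s : ℝ) :
    ∀ n : ℕ, ∫ ω, Real.exp (s * ∑ k ∈ Finset.Icc 1 n, dk k ω) ∂μ
      ≤ Real.exp (n * (s ^ 2 * c ^ 2 / 2)) := by
  have hdk_m0 : ∀ k, 1 ≤ k → Measurable (dk k) :=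
    fun k hk => (hdkm k hk).mono (h𝒢le k) le_rfl
  have hMmeas : ∀ n : ℕ, Measurable[𝒢 n] (fun ω => ∑ k ∈ Finset.Icc 1 n, dk k ω) := by
    intro n
    apply Finset.measurable_sum
    intro k hk
    obtain ⟨hk1, hk2⟩ := Finset.mem_Icc.mp hk
    exact (hdkm k hk1).mono (h𝒢mono hk2) le_rfl
  have hMbdd : ∀ n : ℕ, ∀ ω, |∑ k ∈ Finset.Icc 1 n, dk k ω| ≤ n * c := by
    intro n ω
    calc |∑ k ∈ Finset.Icc 1 n, dk k ω| ≤ ∑ k ∈ Finset.Icc 1 n, |dk k ω| :=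
        Finset.abs_sum_le_sum_abs _ _
      _ ≤ (Finset.Icc 1 n).card • c :=
        Finset.sum_le_card_nsmul _ _ _ (fun k _ => hdkc k ω)
      _ = n * c := by rw [Nat.card_Icc]; simp [nsmul_eq_mul]
  have hexpMbdd : ∀ n : ℕ, ∀ ω, |Real.exp (s * ∑ k ∈ Finset.Icc 1 n, dk k ω)|
      ≤ Real.exp (|s| * (n * c)) := by
    intro n ω
    rw [abs_of_pos (Real.exp_pos _)]
    apply Real.exp_le_exp.2
    calc s * ∑ k ∈ Finset.Icc 1 n, dk k ω ≤ |s * ∑ k ∈ Finset.Icc 1 n, dk k ω| := le_abs_self _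
      _ = |s| * |∑ k ∈ Finset.Icc 1 n, dk k ω| := abs_mul _ _
      _ ≤ |s| * (n * c) := mul_le_mul_of_nonneg_left (hMbdd n ω) (abs_nonneg _)
  have hexpMint : ∀ n : ℕ, Integrable (fun ω => Real.exp (s * ∑ k ∈ Finset.Icc 1 n, dk k ω)) μ := by
    intro n
    refine aux19_int_of_bdd ?_ (hexpMbdd n)
    exact Real.continuous_exp.comp_aestronglyMeasurable
      ((((hMmeas n).mono (h𝒢le n) le_rfl).aestronglyMeasurable).const_mul s)
  intro n
  induction n with
  | zero => simp
  | succ n ih =>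
    have hsplit : ∀ ω, ∑ k ∈ Finset.Icc 1 (n + 1), dk k ω
        = (∑ k ∈ Finset.Icc 1 n, dk k ω) + dk (n + 1) ω := by
      intro ω
      rw [Finset.sum_Icc_succ_top (by omega)]
    set f : Ω → ℝ := fun ω => Real.exp (s * ∑ k ∈ Finset.Icc 1 n, dk k ω) with hf
    set g : Ω → ℝ := fun ω => Real.exp (s * dk (n + 1) ω) with hg
    have hfg : ∀ ω, Real.exp (s * ∑ k ∈ Finset.Icc 1 (n + 1), dk k ω) = f ω * g ω := by
      intro ω
      rw [hsplit ω, mul_add, Real.exp_add]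
    have hf_sm : StronglyMeasurable[𝒢 n] f :=
      (Measurable.exp ((hMmeas n).const_mul s)).stronglyMeasurable
    have hg_bdd : ∀ ω, |g ω| ≤ Real.exp (|s| * c) := by
      intro ω
      rw [abs_of_pos (Real.exp_pos _)]
      apply Real.exp_le_exp.2
      calc s * dk (n+1) ω ≤ |s * dk (n+1) ω| := le_abs_self _
        _ = |s| * |dk (n+1) ω| := abs_mul _ _
        _ ≤ |s| * c := mul_le_mul_of_nonneg_left (hdkc _ ω) (abs_nonneg _)
    have hg_int : Integrable g μ :=
      aux19_int_of_bdd (Real.continuous_exp.comp_aestronglyMeasurable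
        (((hdk_m0 (n+1) (by omega)).aestronglyMeasurable).const_mul s)) hg_bdd
    have hfg_int : Integrable (f * g) μ := by
      have : ∀ ω, |(f * g) ω| ≤ Real.exp (|s| * ((n+1) * c)) := by
        intro ω
        have := hexpMbdd (n+1) ω
        rw [hfg ω] at this
        simpa using this
      refine aux19_int_of_bdd ?_ this
      have := hexpMint (n + 1)
      have heq : (f * g) = fun ω => Real.exp (s * ∑ k ∈ Finset.Icc 1 (n + 1), dk k ω) := by
        funext ω; rw [hfg ω]; rfl
      rw [heq]
      exact this.aestronglyMeasurable
    have hpull : (μ[f * g|𝒢 n]) =ᵐ[μ] f * (μ[g|𝒢 n]) :=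
      condExp_mul_of_stronglyMeasurable_left hf_sm hfg_int hg_int
    have hce : (μ[g|𝒢 n]) ≤ᵐ[μ] fun _ => Real.exp (s ^ 2 * c ^ 2 / 2) :=
      aux19_condexp_exp_le (h𝒢le n) hc ((hdk_m0 (n+1) (by omega)).aestronglyMeasurable)
        (fun ω => hdkc _ ω) (hdk0 n) s
    have hf_nonneg : ∀ ω, 0 ≤ f ω := fun ω => (Real.exp_pos _).le
    have step1 : ∫ ω, Real.exp (s * ∑ k ∈ Finset.Icc 1 (n + 1), dk k ω) ∂μ
        = ∫ ω, (f * (μ[g|𝒢 n])) ω ∂μ := by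
      have h1 : ∫ ω, Real.exp (s * ∑ k ∈ Finset.Icc 1 (n + 1), dk k ω) ∂μ
          = ∫ ω, (f * g) ω ∂μ := by
        apply integral_congr_ae
        exact Filter.Eventually.of_forall (fun ω => hfg ω)
      rw [h1, ← integral_condExp (h𝒢le n) (f := f * g)]
      exact integral_congr_ae hpull
    rw [step1]
    have hint1 : Integrable (f * (μ[g|𝒢 n])) μ :=
      Integrable.bdd_mul integrable_condExp (hf_sm.mono (h𝒢le n)).aestronglyMeasurable
        (Filter.Eventually.of_forall (fun ω => by
          rw [Real.norm_eq_abs]; exact hexpMbdd n ω))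
    have hint2 : Integrable (fun ω => f ω * Real.exp (s ^ 2 * c ^ 2 / 2)) μ :=
      (hexpMint n).mul_const _
    have step2 : ∫ ω, (f * (μ[g|𝒢 n])) ω ∂μ
        ≤ ∫ ω, f ω * Real.exp (s ^ 2 * c ^ 2 / 2) ∂μ := by
      refine integral_mono_ae hint1 hint2 ?_
      filter_upwards [hce] with ω hω
      exact mul_le_mul_of_nonneg_left hω (hf_nonneg ω)
    refine step2.trans ?_
    rw [integral_mul_const]
    calc (∫ ω, f ω ∂μ) * Real.exp (s ^ 2 * c ^ 2 / 2)
        ≤ Real.exp (n * (s ^ 2 * c ^ 2 / 2)) * Real.exp (s ^ 2 * c ^ 2 / 2) :=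
          mul_le_mul_of_nonneg_right ih (Real.exp_pos _).le
      _ = Real.exp ((n + 1 : ℕ) * (s ^ 2 * c ^ 2 / 2)) := by
          rw [← Real.exp_add]; congr 1; push_cast; ring

lemma aux19_azuma (𝒢 : ℕ → MeasurableSpace Ω) (h𝒢mono : Monotone 𝒢)
    (h𝒢le : ∀ n, 𝒢 n ≤ m0) {c : ℝ} (hc : 0 < c) (dk : ℕ → Ω → ℝ)
    (hdkm : ∀ k, 1 ≤ k → Measurable[𝒢 k] (dk k))
    (hdk0 : ∀ k, (μ[dk (k + 1)|𝒢 k]) =ᵐ[μ] 0)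
    (hdkc : ∀ k ω, |dk k ω| ≤ c) (n : ℕ) (y : ℝ) (hy : 0 < y) :
    (μ {ω | ∑ k ∈ Finset.Icc 1 n, dk k ω < -y}).toReal ≤
      Real.exp (-y ^ 2 / (2 * c ^ 2 * n)) := by
  rcases Nat.eq_zero_or_pos n with hn | hn
  · subst hn
    have : {ω : Ω | ∑ k ∈ Finset.Icc 1 0, dk k ω < -y} = ∅ := by
      ext ω; simp; linarith
    rw [this]
    simp [Real.exp_nonneg]
  · have hn' : (0:ℝ) < n := by exact_mod_cast hn
    set s : ℝ := y / (c ^ 2 * n) with hs_def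
    have hs : 0 < s := div_pos hy (by positivity)
    have hmgf := aux19_mgf_sum 𝒢 h𝒢mono h𝒢le hc dk hdkm hdk0 hdkc (-s) n
    set M : Ω → ℝ := fun ω => ∑ k ∈ Finset.Icc 1 n, dk k ω with hM
    have hsubset : {ω | M ω < -y} ⊆ {ω | Real.exp (s * y) ≤ Real.exp (-s * M ω)} := by
      intro ω hω
      simp only [Set.mem_setOf_eq] at hω ⊢
      apply Real.exp_le_exp.2
      nlinarith
    have hint : Integrable (fun ω => Real.exp (-s * M ω)) μ := by
      refine aux19_int_of_bdd ?_ (C := Real.exp (|(-s)| * (n * c))) ?_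
      · refine Real.continuous_exp.comp_aestronglyMeasurable (AEStronglyMeasurable.const_mul ?_ _)
        refine (Measurable.aestronglyMeasurable ?_)
        apply Finset.measurable_sum
        intro k hk
        obtain ⟨hk1, hk2⟩ := Finset.mem_Icc.mp hk
        exact ((hdkm k hk1).mono (h𝒢le k) le_rfl)
      · intro ω
        rw [abs_of_pos (Real.exp_pos _)]
        apply Real.exp_le_exp.2
        calc -s * M ω ≤ |(-s) * M ω| := le_abs_self _
          _ = |(-s)| * |M ω| := abs_mul _ _
          _ ≤ |(-s)| * (n * c) := by
              refine mul_le_mul_of_nonneg_left ?_ (abs_nonneg _)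
              calc |M ω| ≤ ∑ k ∈ Finset.Icc 1 n, |dk k ω| := Finset.abs_sum_le_sum_abs _ _
                _ ≤ (Finset.Icc 1 n).card • c :=
                    Finset.sum_le_card_nsmul _ _ _ (fun k _ => hdkc k ω)
                _ = n * c := by rw [Nat.card_Icc]; simp [nsmul_eq_mul]
    have hmarkov := mul_meas_ge_le_integral_of_nonneg
      (Filter.Eventually.of_forall (fun ω : Ω => (Real.exp_pos (-s * M ω)).le)) hint
      (Real.exp (s * y))
    have hle1 : (μ {ω | M ω < -y}).toReal
        ≤ (μ {ω | Real.exp (s * y) ≤ Real.exp (-s * M ω)}).toReal :=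
      ENNReal.toReal_mono (measure_ne_top _ _) (measure_mono hsubset)
    refine hle1.trans ?_
    have hb : (μ {ω | Real.exp (s * y) ≤ Real.exp (-s * M ω)}).toReal
        ≤ Real.exp (n * ((-s) ^ 2 * c ^ 2 / 2)) / Real.exp (s * y) := by
      rw [le_div_iff₀ (Real.exp_pos _)]
      calc (μ {ω | Real.exp (s * y) ≤ Real.exp (-s * M ω)}).toReal * Real.exp (s * y)
          = Real.exp (s * y) * (μ {ω | Real.exp (s * y) ≤ Real.exp (-s * M ω)}).toReal := by ring
        _ ≤ ∫ ω, Real.exp (-s * M ω) ∂μ := hmarkov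
        _ ≤ Real.exp (n * ((-s) ^ 2 * c ^ 2 / 2)) := hmgf
    refine hb.trans (le_of_eq ?_)
    rw [← Real.exp_sub]
    congr 1
    have hc' : (c:ℝ) ≠ 0 := ne_of_gt hc
    have hn'' : (n:ℝ) ≠ 0 := ne_of_gt hn'
    rw [hs_def]
    field_simp
    ring
end Aux19

section Aux19b
variable {Ω : Type*} {m0 : MeasurableSpace Ω} {μ : Measure Ω} [IsProbabilityMeasure μ]

lemma aux19_int_min_mem {f : Ω → ℝ} (hf : Measurable f) (h0 : ∀ ω, 0 ≤ f ω) {c : ℝ}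
    (hc : 0 < c) :
    (0 ≤ ∫ ω, min (f ω) c ∂μ) ∧ (∫ ω, min (f ω) c ∂μ ≤ c) ∧
      Integrable (fun ω => min (f ω) c) μ := by
  have hmin0 : ∀ ω, 0 ≤ min (f ω) c := fun ω => le_min (h0 ω) hc.le
  have hbdd : ∀ ω, |min (f ω) c| ≤ c := by
    intro ω
    rw [abs_of_nonneg (hmin0 ω)]
    exact min_le_right _ _
  have hint : Integrable (fun ω => min (f ω) c) μ :=
    aux19_int_of_bdd ((hf.min measurable_const).aestronglyMeasurable) hbdd
  refine ⟨integral_nonneg hmin0, ?_, hint⟩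
  calc ∫ ω, min (f ω) c ∂μ ≤ ∫ _, c ∂μ :=
      integral_mono hint (integrable_const _) (fun ω => min_le_right _ _)
    _ = c := by simp
end Aux19b

theorem stmt19
    {Ω : Type*} {m0 : MeasurableSpace Ω} {μ : Measure Ω} [IsProbabilityMeasure μ]
    (𝒢 : ℕ → MeasurableSpace Ω) (h𝒢mono : Monotone 𝒢) (h𝒢le : ∀ n, 𝒢 n ≤ m0)
    (b r : ℝ) (hb : 0 < b) (hr : 0 < r)
    (X B R : ℕ → Ω → ℝ)
    (hX01 : ∀ n ω, X n ω = 0 ∨ X n ω = 1)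
    (hB0 : ∀ n ω, 0 ≤ B n ω) (hR0 : ∀ n ω, 0 ≤ R n ω)
    (hmeas : ∀ n k, 1 ≤ k → k ≤ n →
      Measurable[𝒢 n] (X k) ∧ Measurable[𝒢 n] (B k) ∧ Measurable[𝒢 n] (R k))
    (hBmeas : ∀ n, Measurable (B n)) (hRmeas : ∀ n, Measurable (R n))
    (hindep : ∀ n, 1 ≤ n → Indep
      (MeasurableSpace.comap (fun ω => (B n ω, R n ω)) inferInstance)
      (𝒢 (n - 1) ⊔ MeasurableSpace.comap (X n) inferInstance) μ)
    (m : ℝ) (hm0 : 0 < m)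
    (hmean : ∀ n, ∫ ω, B n ω ∂μ = ∫ ω, R n ω ∂μ)
    (hmlim : Tendsto (fun n : ℕ => ∫ ω, B n ω ∂μ) atTop (𝓝 m))
    (hL2bdd : ∃ K : ℝ, ∀ n, ∫ ω, (B n ω) ^ 2 ∂μ + ∫ ω, (R n ω) ^ 2 ∂μ ≤ K)
    (c : ℝ) (hc : 0 < c) (n0 : ℕ)
    (hmn : ∀ n : ℕ, n0 ≤ n →
      (n : ℝ) * m / 2 <
        ∑ k ∈ Finset.Icc 1 n, min (∫ ω, min (B k ω) c ∂μ) (∫ ω, min (R k ω) c ∂μ))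
    (l : ℝ) (hl : l = m / 4)
    (S : ℕ → Ω → ℝ)
    (hS : ∀ n ω, S n ω =
      b + r + ∑ k ∈ Finset.Icc 1 n, (B k ω * X k ω + R k ω * (1 - X k ω))) :
    (∀ dk : ℕ → Ω → ℝ, (∀ k, 1 ≤ k → Measurable[𝒢 k] (dk k)) →
      (∀ k, (μ[dk (k + 1)|𝒢 k]) =ᵐ[μ] 0) →
      (∀ k ω, |dk k ω| ≤ c) →
      ∀ n : ℕ, ∀ y : ℝ, 0 < y →
        (μ {ω | ∑ k ∈ Finset.Icc 1 n, dk k ω < -y}).toReal ≤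
          Real.exp (-y ^ 2 / (2 * c ^ 2 * n))) ∧
    (∀ n : ℕ, n0 ≤ n → ∀ t : ℝ, t < b + r + n * l →
      (μ {ω | S n ω < t}).toReal ≤
        2 * Real.exp (-(b + r + 2 * n * l - t) ^ 2 / (2 * c ^ 2 * n))) ∧
    (∀ p : ℝ, 0 < p → ∃ Kp : ℝ, ∀ n : ℕ, 1 ≤ n →
      ∫ ω, (S n ω) ^ (-p) ∂μ ≤ Kp * (n : ℝ) ^ (-p)) := by
  have hbr : (0:ℝ) < b + r := by linarith
  have hl0 : 0 < l := by rw [hl]; linarith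
  have part1 : ∀ dk : ℕ → Ω → ℝ, (∀ k, 1 ≤ k → Measurable[𝒢 k] (dk k)) →
      (∀ k, (μ[dk (k + 1)|𝒢 k]) =ᵐ[μ] 0) →
      (∀ k ω, |dk k ω| ≤ c) →
      ∀ n : ℕ, ∀ y : ℝ, 0 < y →
        (μ {ω | ∑ k ∈ Finset.Icc 1 n, dk k ω < -y}).toReal ≤
          Real.exp (-y ^ 2 / (2 * c ^ 2 * n)) :=
    fun dk h1 h2 h3 n y hy => aux19_azuma 𝒢 h𝒢mono h𝒢le hc dk h1 h2 h3 n y hy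
  -- the truncated centered increments
  set dk : ℕ → Ω → ℝ := fun k ω =>
    X k ω * (min (B k ω) c - ∫ ω', min (B k ω') c ∂μ) +
      (1 - X k ω) * (min (R k ω) c - ∫ ω', min (R k ω') c ∂μ) with hdk_def
  have hBmem : ∀ k, (0 ≤ ∫ ω, min (B k ω) c ∂μ) ∧ (∫ ω, min (B k ω) c ∂μ ≤ c) ∧
      Integrable (fun ω => min (B k ω) c) μ := fun k => aux19_int_min_mem (hBmeas k) (hB0 k) hc
  have hRmem : ∀ k, (0 ≤ ∫ ω, min (R k ω) c ∂μ) ∧ (∫ ω, min (R k ω) c ∂μ ≤ c) ∧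
      Integrable (fun ω => min (R k ω) c) μ := fun k => aux19_int_min_mem (hRmeas k) (hR0 k) hc
  have hdkc : ∀ k ω, |dk k ω| ≤ c := by
    intro k ω
    obtain ⟨hB1, hB2, -⟩ := hBmem k
    obtain ⟨hR1, hR2, -⟩ := hRmem k
    have hminB0 : 0 ≤ min (B k ω) c := le_min (hB0 k ω) hc.le
    have hminBc : min (B k ω) c ≤ c := min_le_right _ _
    have hminR0 : 0 ≤ min (R k ω) c := le_min (hR0 k ω) hc.le
    have hminRc : min (R k ω) c ≤ c := min_le_right _ _
    rcases hX01 k ω with h | h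
    · have hh : dk k ω = min (R k ω) c - ∫ ω', min (R k ω') c ∂μ := by
        simp [hdk_def, h]
      rw [hh, abs_le]
      constructor <;> linarith
    · have hh : dk k ω = min (B k ω) c - ∫ ω', min (B k ω') c ∂μ := by
        simp [hdk_def, h]
      rw [hh, abs_le]
      constructor <;> linarith
  have hdkm : ∀ k, 1 ≤ k → Measurable[𝒢 k] (dk k) := by
    intro k hk
    obtain ⟨hXk, hBk, hRk⟩ := hmeas k k hk le_rfl
    exact (hXk.mul ((hBk.min measurable_const).sub measurable_const)).add
      ((measurable_const.sub hXk).mul ((hRk.min measurable_const).sub measurable_const))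
  have hdk0 : ∀ k, (μ[dk (k + 1)|𝒢 k]) =ᵐ[μ] 0 := by
    intro k
    set K := k + 1 with hK
    have hK1 : 1 ≤ K := by omega
    obtain ⟨hXK, hBK, hRK⟩ := hmeas K K hK1 le_rfl
    have hXK0 : Measurable[m0] (X K) := hXK.mono (h𝒢le K) le_rfl
    set m' : MeasurableSpace Ω := 𝒢 k ⊔ MeasurableSpace.comap (X K) inferInstance with hm'
    have hm'le : m' ≤ m0 := sup_le (h𝒢le k) hXK0.comap_le
    have hXm' : Measurable[m'] (X K) := Measurable.of_comap_le le_sup_right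
    set f : Ω → ℝ := fun ω => min (B K ω) c - ∫ ω', min (B K ω') c ∂μ with hf
    set g : Ω → ℝ := fun ω => min (R K ω) c - ∫ ω', min (R K ω') c ∂μ with hg
    have hf_int : Integrable f μ := (hBmem K).2.2.sub (integrable_const _)
    have hg_int : Integrable g μ := (hRmem K).2.2.sub (integrable_const _)
    have hpair : Measurable[m0] (fun ω => (B K ω, R K ω)) := (hBmeas K).prodMk (hRmeas K)
    have hindK := hindep K hK1
    have hKk : K - 1 = k := by omega
    rw [hKk] at hindK
    have hid : Measurable[MeasurableSpace.comap (fun ω => (B K ω, R K ω)) inferInstance]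
        (fun ω => (B K ω, R K ω)) := Measurable.of_comap_le le_rfl
    have hf_sm : StronglyMeasurable[MeasurableSpace.comap
        (fun ω => (B K ω, R K ω)) inferInstance] f := by
      have hφ : Measurable (fun p : ℝ × ℝ => min p.1 c - ∫ ω', min (B K ω') c ∂μ) :=
        (measurable_fst.min measurable_const).sub measurable_const
      exact (hφ.comp hid).stronglyMeasurable
    have hg_sm : StronglyMeasurable[MeasurableSpace.comap
        (fun ω => (B K ω, R K ω)) inferInstance] g := by
      have hφ : Measurable (fun p : ℝ × ℝ => min p.2 c - ∫ ω', min (R K ω') c ∂μ) :=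
        (measurable_snd.min measurable_const).sub measurable_const
      exact (hφ.comp hid).stronglyMeasurable
    have hf_ce : (μ[f|m']) =ᵐ[μ] fun _ => (0:ℝ) := by
      have h1 := condExp_indep_eq (μ := μ) hpair.comap_le hm'le hf_sm hindK
      have h2 : ∫ ω, f ω ∂μ = 0 := by
        rw [hf, integral_sub (hBmem K).2.2 (integrable_const _), integral_const]
        simp
      filter_upwards [h1] with ω hω
      rw [hω, h2]
    have hg_ce : (μ[g|m']) =ᵐ[μ] fun _ => (0:ℝ) := by
      have h1 := condExp_indep_eq (μ := μ) hpair.comap_le hm'le hg_sm hindK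
      have h2 : ∫ ω, g ω ∂μ = 0 := by
        rw [hg, integral_sub (hRmem K).2.2 (integrable_const _), integral_const]
        simp
      filter_upwards [h1] with ω hω
      rw [hω, h2]
    have hXbound : ∀ᵐ ω ∂μ, ‖X K ω‖ ≤ (1:ℝ) := by
      refine Filter.Eventually.of_forall fun ω => ?_
      rcases hX01 K ω with h | h <;> simp [h]
    have hYbound : ∀ᵐ ω ∂μ, ‖((1:Ω → ℝ) - X K) ω‖ ≤ (1:ℝ) := by
      refine Filter.Eventually.of_forall fun ω => ?_
      rcases hX01 K ω with h | h <;> simp [h]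
    have hXf : (μ[(X K) * f|m']) =ᵐ[μ] (X K) * (μ[f|m']) :=
      condExp_stronglyMeasurable_mul_of_bound hm'le hXm'.stronglyMeasurable hf_int 1 hXbound
    have hYg : (μ[((1:Ω → ℝ) - X K) * g|m']) =ᵐ[μ] ((1:Ω → ℝ) - X K) * (μ[g|m']) :=
      condExp_stronglyMeasurable_mul_of_bound hm'le
        (stronglyMeasurable_const.sub hXm'.stronglyMeasurable) hg_int 1 hYbound
    have hdkfun : dk K = (X K) * f + ((1:Ω → ℝ) - X K) * g := by
      funext ω
      simp [hdk_def, hf, hg]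
    have hf_m : Measurable[m0] f := ((hBmeas K).min measurable_const).sub measurable_const
    have hg_m : Measurable[m0] g := ((hRmeas K).min measurable_const).sub measurable_const
    have hf_bdd : ∀ ω, |f ω| ≤ c := by
      intro ω
      obtain ⟨hB1, hB2, -⟩ := hBmem K
      have h1 : 0 ≤ min (B K ω) c := le_min (hB0 K ω) hc.le
      have h2 : min (B K ω) c ≤ c := min_le_right _ _
      have hfr : f ω = min (B K ω) c - ∫ ω', min (B K ω') c ∂μ := rfl
      rw [hfr, abs_le]; constructor <;> linarith
    have hg_bdd : ∀ ω, |g ω| ≤ c := by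
      intro ω
      obtain ⟨hR1, hR2, -⟩ := hRmem K
      have h1 : 0 ≤ min (R K ω) c := le_min (hR0 K ω) hc.le
      have h2 : min (R K ω) c ≤ c := min_le_right _ _
      have hgr : g ω = min (R K ω) c - ∫ ω', min (R K ω') c ∂μ := rfl
      rw [hgr, abs_le]; constructor <;> linarith
    have hXf_int : Integrable ((X K) * f) μ := by
      refine aux19_int_of_bdd (hXK0.mul hf_m).aestronglyMeasurable (C := c) ?_
      intro ω
      rw [Pi.mul_apply, abs_mul]
      rcases hX01 K ω with h | h
      · rw [h]; simpa using hc.le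
      · rw [h]; simpa using hf_bdd ω
    have hYg_int : Integrable (((1:Ω → ℝ) - X K) * g) μ := by
      refine aux19_int_of_bdd ((measurable_const.sub hXK0).mul hg_m).aestronglyMeasurable
        (C := c) ?_
      intro ω
      rw [Pi.mul_apply, abs_mul, Pi.sub_apply, Pi.one_apply]
      rcases hX01 K ω with h | h
      · rw [h]; simpa using hg_bdd ω
      · rw [h]; simpa using hc.le
    have hsum : (μ[dk K|m']) =ᵐ[μ] fun _ => (0:ℝ) := by
      rw [hdkfun]
      have hadd := condExp_add (μ := μ) (m := m') hXf_int hYg_int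
      filter_upwards [hadd, hXf, hYg, hf_ce, hg_ce] with ω h1 h2 h3 h4 h5
      rw [Pi.add_apply] at h1
      rw [h1, h2, h3, Pi.mul_apply, Pi.mul_apply, h4, h5]
      simp
    have htower := condExp_condExp_of_le (μ := μ) (f := dk K)
      (le_sup_left : 𝒢 k ≤ m') hm'le
    refine (htower.symm.trans (condExp_congr_ae hsum)).trans ?_
    rw [show (fun _ : Ω => (0:ℝ)) = (0 : Ω → ℝ) from rfl, condExp_zero]
  have part2 : ∀ n : ℕ, n0 ≤ n → ∀ t : ℝ, t < b + r + n * l →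
      (μ {ω | S n ω < t}).toReal ≤
        2 * Real.exp (-(b + r + 2 * n * l - t) ^ 2 / (2 * c ^ 2 * n)) := by
    intro n hn t ht
    have hmn' := hmn n hn
    have hnl : (0:ℝ) ≤ (n:ℝ) * l := by positivity
    have hy : 0 < b + r + 2 * (n:ℝ) * l - t := by linarith
    have hsub : {ω | S n ω < t} ⊆
        {ω | ∑ k ∈ Finset.Icc 1 n, dk k ω < -(b + r + 2 * (n:ℝ) * l - t)} := by
      intro ω hω
      simp only [Set.mem_setOf_eq] at hω ⊢
      have hterm : ∀ k ∈ Finset.Icc 1 n,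
          dk k ω + min (∫ ω', min (B k ω') c ∂μ) (∫ ω', min (R k ω') c ∂μ)
            ≤ B k ω * X k ω + R k ω * (1 - X k ω) := by
        intro k _
        have h1 : min (B k ω) c ≤ B k ω := min_le_left _ _
        have h2 : min (R k ω) c ≤ R k ω := min_le_left _ _
        have h3 := min_le_left (∫ ω', min (B k ω') c ∂μ) (∫ ω', min (R k ω') c ∂μ)
        have h4 := min_le_right (∫ ω', min (B k ω') c ∂μ) (∫ ω', min (R k ω') c ∂μ)
        rcases hX01 k ω with h | h
        · have hh : dk k ω = min (R k ω) c - ∫ ω', min (R k ω') c ∂μ := by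
            simp [hdk_def, h]
          rw [hh, h]
          ring_nf
          linarith
        · have hh : dk k ω = min (B k ω) c - ∫ ω', min (B k ω') c ∂μ := by
            simp [hdk_def, h]
          rw [hh, h]
          ring_nf
          linarith
      have hsum_le := Finset.sum_le_sum hterm
      rw [Finset.sum_add_distrib] at hsum_le
      have hS' := hS n ω
      have h2l : 2 * (n:ℝ) * l = (n:ℝ) * m / 2 := by rw [hl]; ring
      linarith
    calc (μ {ω | S n ω < t}).toReal
        ≤ (μ {ω | ∑ k ∈ Finset.Icc 1 n, dk k ω < -(b + r + 2 * (n:ℝ) * l - t)}).toReal :=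
          ENNReal.toReal_mono (measure_ne_top _ _) (measure_mono hsub)
      _ ≤ Real.exp (-(b + r + 2 * (n:ℝ) * l - t) ^ 2 / (2 * c ^ 2 * n)) :=
          part1 dk hdkm hdk0 hdkc n _ hy
      _ ≤ 2 * Real.exp (-(b + r + 2 * (n:ℝ) * l - t) ^ 2 / (2 * c ^ 2 * n)) := by
          have := Real.exp_pos (-(b + r + 2 * (n:ℝ) * l - t) ^ 2 / (2 * c ^ 2 * n))
          linarith
  refine ⟨part1, part2, ?_⟩
  intro p hp
  have ha : (0:ℝ) < 9 * l ^ 2 / (8 * c ^ 2) := by positivity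
  set a : ℝ := 9 * l ^ 2 / (8 * c ^ 2) with ha_def
  set Kn : ℕ := ⌈p⌉₊ with hKn_def
  have hKn1 : 1 ≤ Kn := Nat.ceil_pos.mpr hp
  have hpK : p ≤ (Kn:ℝ) := Nat.le_ceil p
  have hKa : (0:ℝ) < (Kn:ℝ) / a := by
    apply div_pos _ ha
    exact_mod_cast hKn1
  have hexpb : ∀ n : ℕ, 1 ≤ n →
      Real.exp (-(a * n)) ≤ ((Kn:ℝ) / a) ^ Kn * (n:ℝ) ^ (-p) := by
    intro n hn
    have hn' : (0:ℝ) < n := by exact_mod_cast hn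
    have hn1 : (1:ℝ) ≤ n := by exact_mod_cast hn
    have hKn' : (0:ℝ) < (Kn:ℝ) := by exact_mod_cast hKn1
    have hx : (0:ℝ) < a * n / Kn := by positivity
    have hxe : a * n / Kn ≤ Real.exp (a * n / Kn) := by
      have := Real.add_one_le_exp (a * n / Kn); linarith
    have h1 : (a * n / Kn) ^ Kn ≤ Real.exp (a * n) := by
      calc (a * n / Kn) ^ Kn ≤ (Real.exp (a * n / Kn)) ^ Kn :=
            pow_le_pow_left₀ hx.le hxe Kn
        _ = Real.exp (a * n) := by
            rw [← Real.exp_nat_mul]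
            congr 1
            field_simp
    have h2 : Real.exp (-(a * n)) ≤ ((Kn:ℝ) / (a * n)) ^ Kn := by
      rw [Real.exp_neg]
      rw [show ((Kn:ℝ) / (a * n)) ^ Kn = ((a * n / Kn) ^ Kn)⁻¹ by
        rw [← inv_pow, inv_div]]
      exact inv_anti₀ (by positivity) h1
    have h3 : ((Kn:ℝ) / (a * n)) ^ Kn = ((Kn:ℝ) / a) ^ Kn * ((n:ℝ)⁻¹) ^ Kn := by
      rw [← mul_pow]
      congr 1
      field_simp
    have h4 : ((n:ℝ)⁻¹) ^ Kn = (n:ℝ) ^ (-(Kn:ℝ)) := by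
      rw [Real.rpow_neg hn'.le, Real.rpow_natCast, inv_pow]
    have h5 : (n:ℝ) ^ (-(Kn:ℝ)) ≤ (n:ℝ) ^ (-p) :=
      Real.rpow_le_rpow_of_exponent_le hn1 (neg_le_neg hpK)
    calc Real.exp (-(a * n)) ≤ ((Kn:ℝ) / (a * n)) ^ Kn := h2
      _ = ((Kn:ℝ) / a) ^ Kn * (n:ℝ) ^ (-(Kn:ℝ)) := by rw [h3, h4]
      _ ≤ ((Kn:ℝ) / a) ^ Kn * (n:ℝ) ^ (-p) :=
          mul_le_mul_of_nonneg_left h5 (pow_nonneg hKa.le _)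
  set N : ℕ := max n0 1 with hN_def
  set C1 : ℝ := (l / 2) ^ (-p) with hC1_def
  set C2 : ℝ := (b + r) ^ (-p) * (2 * ((Kn:ℝ) / a) ^ Kn) with hC2_def
  set C3 : ℝ := (b + r) ^ (-p) * (N:ℝ) ^ p with hC3_def
  have hC1n : 0 ≤ C1 := Real.rpow_nonneg (by linarith) _
  have hC2n : 0 ≤ C2 := by
    apply mul_nonneg (Real.rpow_nonneg hbr.le _)
    positivity
  have hC3n : 0 ≤ C3 := by
    apply mul_nonneg (Real.rpow_nonneg hbr.le _)
    positivity
  refine ⟨C1 + C2 + C3, ?_⟩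
  intro n hn
  have hn' : (0:ℝ) < n := by exact_mod_cast hn
  have hn1 : (1:ℝ) ≤ n := by exact_mod_cast hn
  have hnp_nonneg : (0:ℝ) ≤ (n:ℝ) ^ (-p) := Real.rpow_nonneg hn'.le _
  have hSmeas : Measurable (S n) := by
    have hSfun : S n = fun ω =>
        b + r + ∑ k ∈ Finset.Icc 1 n, (B k ω * X k ω + R k ω * (1 - X k ω)) :=
      funext (hS n)
    rw [hSfun]
    refine measurable_const.add (Finset.measurable_sum _ fun k hk => ?_)
    obtain ⟨hk1, hk2⟩ := Finset.mem_Icc.mp hk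
    obtain ⟨hXk, hBk, hRk⟩ := hmeas n k hk1 hk2
    exact ((hBk.mono (h𝒢le n) le_rfl).mul (hXk.mono (h𝒢le n) le_rfl)).add
      ((hRk.mono (h𝒢le n) le_rfl).mul (measurable_const.sub (hXk.mono (h𝒢le n) le_rfl)))
  have hSlb : ∀ ω, b + r ≤ S n ω := by
    intro ω
    rw [hS n ω]
    have hsum0 : 0 ≤ ∑ k ∈ Finset.Icc 1 n, (B k ω * X k ω + R k ω * (1 - X k ω)) := by
      refine Finset.sum_nonneg fun k _ => ?_
      rcases hX01 k ω with h | h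
      · simp only [h, mul_zero, sub_zero, mul_one, zero_add]
        exact hR0 k ω
      · simp only [h, mul_one, sub_self, mul_zero, add_zero]
        exact hB0 k ω
    linarith
  have hSpos : ∀ ω, 0 < S n ω := fun ω => lt_of_lt_of_le hbr (hSlb ω)
  have hrpow_meas : Measurable fun ω => S n ω ^ (-p) := by
    have heq : (fun ω => S n ω ^ (-p)) = fun ω => Real.exp (Real.log (S n ω) * (-p)) := by
      funext ω
      rw [Real.rpow_def_of_pos (hSpos ω)]
    rw [heq]
    exact ((Real.measurable_log.comp hSmeas).mul_const (-p)).exp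
  have hrpow_nonneg : ∀ ω, 0 ≤ S n ω ^ (-p) := fun ω => Real.rpow_nonneg (hSpos ω).le _
  have hrpow_le_br : ∀ ω, S n ω ^ (-p) ≤ (b + r) ^ (-p) := fun ω =>
    Real.rpow_le_rpow_of_nonpos hbr (hSlb ω) (neg_nonpos.mpr hp.le)
  have hint : Integrable (fun ω => S n ω ^ (-p)) μ := by
    refine aux19_int_of_bdd hrpow_meas.aestronglyMeasurable (C := (b + r) ^ (-p)) fun ω => ?_
    rw [abs_of_nonneg (hrpow_nonneg ω)]
    exact hrpow_le_br ω
  by_cases hcase : n0 ≤ n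
  · set t : ℝ := b + r + n * l / 2 with ht_def
    have hnlpos : (0:ℝ) < (n:ℝ) * l := by positivity
    have htpos : 0 < t := by rw [ht_def]; linarith
    have ht_lt : t < b + r + n * l := by rw [ht_def]; linarith
    have hP := part2 n hcase t ht_lt
    have hA : MeasurableSet {ω | S n ω < t} := measurableSet_lt hSmeas measurable_const
    have hkey : -(b + r + 2 * n * l - t) ^ 2 / (2 * c ^ 2 * n) = -(a * n) := by
      rw [ht_def, ha_def]
      have hn0 : (n:ℝ) ≠ 0 := ne_of_gt hn'
      field_simp
      ring
    rw [hkey] at hP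
    have hpt : ∀ ω, S n ω ^ (-p)
        ≤ t ^ (-p) + (b + r) ^ (-p) * Set.indicator {ω | S n ω < t} (fun _ => 1) ω := by
      intro ω
      by_cases hω : S n ω < t
      · rw [Set.indicator_of_mem (show ω ∈ {ω | S n ω < t} from hω)]
        have h1 : (0:ℝ) ≤ t ^ (-p) := Real.rpow_nonneg htpos.le _
        have h2 := hrpow_le_br ω
        rw [mul_one]
        linarith
      · rw [Set.indicator_of_notMem (show ω ∉ {ω | S n ω < t} from hω), mul_zero, add_zero]
        push_neg at hω
        exact Real.rpow_le_rpow_of_nonpos htpos hω (neg_nonpos.mpr hp.le)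
    have hind_int : Integrable (Set.indicator {ω | S n ω < t} (fun _ => (1:ℝ))) μ :=
      (integrable_const 1).indicator hA
    have hRHS_int : Integrable (fun ω =>
        t ^ (-p) + (b + r) ^ (-p) * Set.indicator {ω | S n ω < t} (fun _ => 1) ω) μ :=
      (integrable_const _).add (hind_int.const_mul _)
    have hInt_le := integral_mono hint hRHS_int hpt
    have hRHS_eq : ∫ ω, (t ^ (-p)
          + (b + r) ^ (-p) * Set.indicator {ω | S n ω < t} (fun _ => 1) ω) ∂μ
        = t ^ (-p) + (b + r) ^ (-p) * (μ {ω | S n ω < t}).toReal := by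
      rw [integral_add (integrable_const _) (hind_int.const_mul _), integral_const,
        integral_const_mul, integral_indicator_const (1:ℝ) hA]
      simp [measureReal_def]
    rw [hRHS_eq] at hInt_le
    have h1 : t ^ (-p) ≤ C1 * (n:ℝ) ^ (-p) := by
      have hle : (n:ℝ) * (l / 2) ≤ t := by
        rw [ht_def]
        calc (n:ℝ) * (l / 2) = (n:ℝ) * l / 2 := by ring
          _ ≤ b + r + (n:ℝ) * l / 2 := le_add_of_nonneg_left hbr.le
      have hmp : (0:ℝ) < (n:ℝ) * (l / 2) := by positivity
      have h := Real.rpow_le_rpow_of_nonpos hmp hle (neg_nonpos.mpr hp.le)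
      rwa [Real.mul_rpow hn'.le (by linarith : (0:ℝ) ≤ l / 2), mul_comm] at h
    have h2 : (b + r) ^ (-p) * (μ {ω | S n ω < t}).toReal ≤ C2 * (n:ℝ) ^ (-p) := by
      have hbrn : (0:ℝ) ≤ (b + r) ^ (-p) := Real.rpow_nonneg hbr.le _
      have hstep := hP.trans (by
        have := hexpb n hn
        linarith : 2 * Real.exp (-(a * n)) ≤ 2 * (((Kn:ℝ) / a) ^ Kn * (n:ℝ) ^ (-p)))
      calc (b + r) ^ (-p) * (μ {ω | S n ω < t}).toReal
          ≤ (b + r) ^ (-p) * (2 * (((Kn:ℝ) / a) ^ Kn * (n:ℝ) ^ (-p))) :=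
            mul_le_mul_of_nonneg_left hstep hbrn
        _ = C2 * (n:ℝ) ^ (-p) := by rw [hC2_def]; ring
    calc ∫ ω, S n ω ^ (-p) ∂μ
        ≤ t ^ (-p) + (b + r) ^ (-p) * (μ {ω | S n ω < t}).toReal := hInt_le
      _ ≤ C1 * (n:ℝ) ^ (-p) + C2 * (n:ℝ) ^ (-p) := add_le_add h1 h2
      _ ≤ (C1 + C2 + C3) * (n:ℝ) ^ (-p) := by
          have h3 : (C1 + C2 + C3) * (n:ℝ) ^ (-p)
              = C1 * (n:ℝ) ^ (-p) + C2 * (n:ℝ) ^ (-p) + C3 * (n:ℝ) ^ (-p) := by ring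
          have h4 : 0 ≤ C3 * (n:ℝ) ^ (-p) := mul_nonneg hC3n hnp_nonneg
          linarith
  · push_neg at hcase
    have hle : ∫ ω, S n ω ^ (-p) ∂μ ≤ (b + r) ^ (-p) := by
      calc ∫ ω, S n ω ^ (-p) ∂μ ≤ ∫ _, (b + r) ^ (-p) ∂μ :=
          integral_mono hint (integrable_const _) hrpow_le_br
        _ = (b + r) ^ (-p) := by simp
    have hnN : (n:ℝ) ≤ (N:ℝ) := by
      have : n ≤ N := le_trans hcase.le (le_max_left _ _)
      exact_mod_cast this
    have hNp : (n:ℝ) ^ p ≤ (N:ℝ) ^ p := Real.rpow_le_rpow hn'.le hnN hp.le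
    have hone : (n:ℝ) ^ p * (n:ℝ) ^ (-p) = 1 := by
      rw [← Real.rpow_add hn']
      simp
    have h1 : (1:ℝ) ≤ (N:ℝ) ^ p * (n:ℝ) ^ (-p) := by
      calc (1:ℝ) = (n:ℝ) ^ p * (n:ℝ) ^ (-p) := hone.symm
        _ ≤ (N:ℝ) ^ p * (n:ℝ) ^ (-p) := mul_le_mul_of_nonneg_right hNp hnp_nonneg
    have hbrn : (0:ℝ) ≤ (b + r) ^ (-p) := Real.rpow_nonneg hbr.le _
    calc ∫ ω, S n ω ^ (-p) ∂μ ≤ (b + r) ^ (-p) := hle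
      _ = (b + r) ^ (-p) * 1 := (mul_one _).symm
      _ ≤ (b + r) ^ (-p) * ((N:ℝ) ^ p * (n:ℝ) ^ (-p)) :=
          mul_le_mul_of_nonneg_left h1 hbrn
      _ = C3 * (n:ℝ) ^ (-p) := by rw [hC3_def]; ring
      _ ≤ (C1 + C2 + C3) * (n:ℝ) ^ (-p) := by
          have h3 : (C1 + C2 + C3) * (n:ℝ) ^ (-p)
              = (C1 + C2) * (n:ℝ) ^ (-p) + C3 * (n:ℝ) ^ (-p) := by ring
          have h4 : 0 ≤ (C1 + C2) * (n:ℝ) ^ (-p) :=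
            mul_nonneg (add_nonneg hC1n hC2n) hnp_nonneg
          linarith
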